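/- Let C > 0, let α ≤ β be integers, let d : {α,…,β} → ℝ, and let x : {α−1,…,β} → ℝ, u, y : {α,…,β} → ℝ satisfy x(α−1) = 0, x(k) = x(k−1) − d(k) + u(k) for all k ∈ {α,…,β}, x(k) ≥ 0 for all k, 0 ≤ u(k) ≤ C y(k), and y(k) ∈ {0,1} for all k. Then for every t ∈ {α,…,β}, Σ_{k=α}^{t} y(k) ≥ ⌈ (Σ_{k=α}^{t} d(k)) / C ⌉. -/

import Mathlib

/-- In the capacitated lot sizing dynamics over a regeneration
interval, the number of setups over any prefix [α, t] is at least the ceiling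
of the accumulated demand divided by the capacity. -/
theorem prefix_setup_lower_bound (C : ℝ) (hC : 0 < C) (α β : ℤ) (hαβ : α ≤ β)
    (d x u y : ℤ → ℝ)
    (hx0 : x (α - 1) = 0)
    (hdyn : ∀ k, α ≤ k → k ≤ β → x k = x (k - 1) - d k + u k)
    (hxnn : ∀ k, α - 1 ≤ k → k ≤ β → 0 ≤ x k)
    (hu : ∀ k, α ≤ k → k ≤ β → 0 ≤ u k ∧ u k ≤ C * y k)
    (hy : ∀ k, α ≤ k → k ≤ β → y k = 0 ∨ y k = 1) :
    ∀ t, α ≤ t → t ≤ β →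
      (⌈(∑ k ∈ Finset.Icc α t, d k) / C⌉ : ℝ) ≤ ∑ k ∈ Finset.Icc α t, y k := by
  intro t hαt htβ
  -- telescoped dynamics: x t = ∑ (u k - d k)
  have hxsum : ∀ t, α ≤ t → t ≤ β → x t = ∑ k ∈ Finset.Icc α t, (u k - d k) := by
    intro t hαt
    refine Int.le_induction (motive := fun t _ => t ≤ β → x t = ∑ k ∈ Finset.Icc α t, (u k - d k)) ?_ ?_ t hαt
    · intro htβ
      rw [Finset.Icc_self, Finset.sum_singleton, hdyn α le_rfl htβ, hx0]
      ring
    · intro n hn ih htβ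
      have hnβ : n ≤ β := by omega
      have hicc : Finset.Icc α (n + 1) = insert (n + 1) (Finset.Icc α n) := by
        ext k; simp only [Finset.mem_Icc, Finset.mem_insert]; omega
      rw [hicc, Finset.sum_insert (by simp), ← ih hnβ,
        hdyn (n + 1) (by omega) htβ]
      have h1 : n + 1 - 1 = n := by ring
      rw [h1]; ring
  have hxt := hxsum t hαt htβ
  have hxnn' := hxnn t (by omega) htβ
  have hdu : ∑ k ∈ Finset.Icc α t, d k ≤ ∑ k ∈ Finset.Icc α t, u k := by
    have : 0 ≤ ∑ k ∈ Finset.Icc α t, (u k - d k) := hxt ▸ hxnn'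
    rw [Finset.sum_sub_distrib] at this
    linarith
  have huy : ∑ k ∈ Finset.Icc α t, u k ≤ C * ∑ k ∈ Finset.Icc α t, y k := by
    rw [Finset.mul_sum]
    refine Finset.sum_le_sum fun k hk => ?_
    simp only [Finset.mem_Icc] at hk
    exact (hu k hk.1 (hk.2.trans htβ)).2
  have hmain : (∑ k ∈ Finset.Icc α t, d k) / C ≤ ∑ k ∈ Finset.Icc α t, y k := by
    rw [div_le_iff₀ hC]
    calc ∑ k ∈ Finset.Icc α t, d k ≤ C * ∑ k ∈ Finset.Icc α t, y k :=
          le_trans hdu huy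
      _ = (∑ k ∈ Finset.Icc α t, y k) * C := by ring
  -- the y-sum is an integer
  have hyint : ((∑ k ∈ Finset.Icc α t, ⌈y k⌉ : ℤ) : ℝ) = ∑ k ∈ Finset.Icc α t, y k := by
    push_cast
    refine Finset.sum_congr rfl fun k hk => ?_
    simp only [Finset.mem_Icc] at hk
    rcases hy k hk.1 (hk.2.trans htβ) with h | h <;> simp [h]
  rw [← hyint]
  exact_mod_cast Int.ceil_le.mpr (by rw [hyint]; exact hmain)
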